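/- Let T be a Hausdorff tree, α a limit ordinal with κ = cf(α), and suppose H_ξ ⊆ T_α is simple for every ξ < κ. Then the union H = ⋃_{ξ<κ} H_ξ is simple. In particular, a countable union of simple subsets of T_α is simple. -/

import Mathlib

open Set
open Cardinal

/-- A partial order is a tree order if the set of strict predecessors of
each element is well-ordered. -/
def IsTreeOrder (T : Type) [PartialOrder T] : Prop :=
  ∀ x : T, IsWellOrder {y : T // y < x} (fun a b => (a : T) < (b : T))

/-- The height of an element of a tree: the order type of its set of strict
predecessors. -/
noncomputable def treeHt {T : Type} [PartialOrder T] (hT : IsTreeOrder T) (x : T) : Ordinal :=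
  @Ordinal.type {y : T // y < x} (fun a b => (a : T) < (b : T)) (hT x)

/-- The level of a tree of order `α`. -/
def treeLevel {T : Type} [PartialOrder T] (hT : IsTreeOrder T) (α : Ordinal) : Set T :=
  {x : T | treeHt hT x = α}

/-- `f` is a cofinal sequence in the limit ordinal `α`: it is a strictly increasing
`cf α`-indexed sequence of ordinals below `α` whose supremum is `α`. -/
def IsCofinalSeq (α : Ordinal) (f : Ordinal → Ordinal) : Prop :=
  (∀ ξ η : Ordinal, ξ < η → η < α.cof.ord → f ξ < f η) ∧
  (∀ ξ : Ordinal, ξ < α.cof.ord → f ξ < α) ∧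
  (∀ β : Ordinal, β < α → ∃ ξ : Ordinal, ξ < α.cof.ord ∧ β ≤ f ξ)

/-- A subset `H` of the level `T_α` (`α` a limit ordinal) is simple if for some
cofinal sequence `(α_ξ)_{ξ < cf α}` in `α` there is an injective regressive map
from `H` into `⋃_{ξ < cf α} T_{α_ξ}`. -/
def TreeSimple {T : Type} [PartialOrder T] (hT : IsTreeOrder T) (α : Ordinal)
    (H : Set T) : Prop :=
  ∃ f : Ordinal → Ordinal, IsCofinalSeq α f ∧
    ∃ π : T → T, Set.InjOn π H ∧
      ∀ x ∈ H, π x < x ∧ ∃ ξ : Ordinal, ξ < α.cof.ord ∧ treeHt hT (π x) = f ξ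

/-- A tree is Hausdorff if every nonempty totally ordered subset has at most one
minimal upper bound. -/
def IsHausdorffTree (T : Type) [PartialOrder T] : Prop :=
  ∀ A : Set T, A.Nonempty → IsChain (· ≤ ·) A → ∀ u v : T,
    u ∈ upperBounds A → (∀ w ∈ upperBounds A, ¬ w < u) →
    v ∈ upperBounds A → (∀ w ∈ upperBounds A, ¬ w < v) → u = v

/-- The interval topology on a tree, generated by the sets `(x, z]` and `(0, z]`. -/
def intervalTopology (T : Type) [PartialOrder T] : TopologicalSpace T :=
  TopologicalSpace.generateFrom
    ({s : Set T | ∃ x z : T, s = Set.Ioc x z} ∪ {s : Set T | ∃ z : T, s = Set.Iic z})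

section Aux
variable {T : Type} [PartialOrder T] (hT : IsTreeOrder T)

lemma treeHt_eq_typein {x y : T} (h : y < x) :
    treeHt hT y =
      @Ordinal.typein {z : T // z < x} (fun a b => (a : T) < (b : T)) (hT x) ⟨y, h⟩ := by
  haveI := hT x
  haveI := hT y
  rw [← Ordinal.type_subrel]
  refine Ordinal.type_eq.2 ⟨⟨⟨fun z => ⟨⟨z.1, z.2.trans h⟩, z.2⟩,
    fun w => ⟨w.1.1, w.2⟩, fun z => rfl, fun w => rfl⟩, Iff.rfl⟩⟩

lemma treeHt_lt_of_lt {x y : T} (h : y < x) : treeHt hT y < treeHt hT x := by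
  haveI := hT x
  rw [treeHt_eq_typein hT h]
  exact Ordinal.typein_lt_type _ _

lemma exists_pred {x : T} {β : Ordinal} (hβ : β < treeHt hT x) :
    ∃ y, y < x ∧ treeHt hT y = β := by
  haveI := hT x
  obtain ⟨a, ha⟩ := Ordinal.typein_surj (fun a b : {y : T // y < x} => (a : T) < (b : T)) hβ
  exact ⟨a.1, a.2, by rw [treeHt_eq_typein hT a.2]; exact ha⟩

lemma pred_unique {x y z : T} (hy : y < x) (hz : z < x)
    (h : treeHt hT y = treeHt hT z) : y = z := by
  haveI := hT x
  rw [treeHt_eq_typein hT hy, treeHt_eq_typein hT hz] at h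
  have := Ordinal.typein_injective (fun a b : {y : T // y < x} => (a : T) < (b : T)) h
  exact congrArg Subtype.val this

include hT in
lemma pred_comparable {x y z : T} (hy : y < x) (hz : z < x) :
    y < z ∨ y = z ∨ z < y := by
  haveI := hT x
  rcases trichotomous_of (fun a b : {y : T // y < x} => (a : T) < (b : T)) ⟨y, hy⟩ ⟨z, hz⟩ with h | h | h
  · exact Or.inl h
  · exact Or.inr (Or.inl (congrArg Subtype.val h))
  · exact Or.inr (Or.inr h)

open Classical in
noncomputable def treeRestr (x : T) (β : Ordinal) : T :=
  if h : ∃ y, y < x ∧ treeHt hT y = β then h.choose else x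

lemma treeRestr_spec {x : T} {β : Ordinal} (hβ : β < treeHt hT x) :
    treeRestr hT x β < x ∧ treeHt hT (treeRestr hT x β) = β := by
  have h : ∃ y, y < x ∧ treeHt hT y = β := exists_pred hT hβ
  rw [treeRestr, dif_pos h]
  exact h.choose_spec

lemma treeRestr_eq {x y : T} {β : Ordinal} (hy : y < x) (hht : treeHt hT y = β) :
    treeRestr hT x β = y := by
  have hβ : β < treeHt hT x := hht ▸ treeHt_lt_of_lt hT hy
  obtain ⟨h1, h2⟩ := treeRestr_spec hT hβ
  exact pred_unique hT h1 hy (h2.trans hht.symm)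

lemma treeRestr_agree {x y : T} {α g δ : Ordinal}
    (hx : treeHt hT x = α) (hy : treeHt hT y = α) (hgδ : g ≤ δ) (hδ : δ < α)
    (hagree : treeRestr hT x δ = treeRestr hT y δ) :
    treeRestr hT x g = treeRestr hT y g := by
  rcases eq_or_lt_of_le hgδ with rfl | hgδ
  · exact hagree
  have hg : g < α := hgδ.trans hδ
  obtain ⟨hux, hhtux⟩ := treeRestr_spec hT (x := x) (hx ▸ hg)
  obtain ⟨hvx, hhtvx⟩ := treeRestr_spec hT (x := x) (hx ▸ hδ)
  obtain ⟨hvy, hhtvy⟩ := treeRestr_spec hT (x := y) (hy ▸ hδ)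
  have huv : treeRestr hT x g < treeRestr hT x δ := by
    rcases pred_comparable hT hux hvx with h | h | h
    · exact h
    · exact absurd (h ▸ hhtux : treeHt hT (treeRestr hT x δ) = g)
        (by rw [hhtvx]; exact (ne_of_lt hgδ).symm)
    · exact absurd (treeHt_lt_of_lt hT h) (by rw [hhtux, hhtvx]; exact not_lt.2 hgδ.le)
  have hlty : treeRestr hT x g < y := lt_trans (hagree ▸ huv) hvy
  exact (treeRestr_eq hT hlty hhtux).symm

end Aux

lemma union_simple {T : Type} [PartialOrder T] (hT : IsTreeOrder T)
    (α : Ordinal) (hα : Order.IsSuccLimit α)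
    (H : Ordinal → Set T)
    (hHsub : ∀ ξ : Ordinal, ξ < α.cof.ord → H ξ ⊆ treeLevel hT α)
    (hHsimple : ∀ ξ : Ordinal, ξ < α.cof.ord → TreeSimple hT α (H ξ)) :
    TreeSimple hT α (⋃ ξ ∈ Set.Iio α.cof.ord, H ξ) := by
  classical
  have hℵ : ℵ₀ ≤ α.cof := Ordinal.aleph0_le_cof.2 hα
  set κ := α.cof.ord with hκdef
  have hκcard : κ.card = α.cof := Cardinal.card_ord _
  have hκlim : Order.IsSuccLimit κ := Cardinal.isSuccLimit_ord hℵ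
  have hκ0 : (0 : Ordinal) < κ := hκlim.pos
  choose f hf π hπinj hπ using hHsimple
  set fT : Ordinal → Ordinal → Ordinal := fun ξ => if h : ξ < κ then f ξ h else fun _ => 0
    with hfTdef
  set πT : Ordinal → T → T := fun ξ => if h : ξ < κ then π ξ h else id with hπTdef
  have hfT : ∀ ξ (h : ξ < κ), fT ξ = f ξ h := fun ξ h => by simp [hfTdef, h]
  have hπT : ∀ ξ (h : ξ < κ), πT ξ = π ξ h := fun ξ h => by simp [hπTdef, h]
  -- a pairing function
  obtain ⟨e⟩ : Nonempty (κ.ToType × κ.ToType ↪ κ.ToType) := by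
    have h1 : #(κ.ToType × κ.ToType) = #κ.ToType := by
      rw [Cardinal.mk_prod, Cardinal.mk_toType, hκcard]
      simp [Cardinal.mul_eq_self hℵ]
    exact ⟨(Cardinal.eq.1 h1).some.toEmbedding⟩
  set en := Ordinal.ToType.mk (o := κ) with hen
  set q : Ordinal → Ordinal → Ordinal := fun ξ η =>
    if h : ξ < κ ∧ η < κ then (en.symm (e (en ⟨ξ, h.1⟩, en ⟨η, h.2⟩))).1 else 0 with hqdef
  have hqlt : ∀ ξ η, q ξ η < κ := by
    intro ξ η
    by_cases h : ξ < κ ∧ η < κ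
    · simp only [hqdef, dif_pos h]; exact (en.symm _).2
    · simp only [hqdef, dif_neg h]; exact hκ0
  have hqinj : ∀ ξ η ξ' η', ξ < κ → η < κ → ξ' < κ → η' < κ →
      q ξ η = q ξ' η' → ξ = ξ' ∧ η = η' := by
    intro ξ η ξ' η' h1 h2 h3 h4 heq
    simp only [hqdef, dif_pos (show ξ < κ ∧ η < κ from ⟨h1, h2⟩),
      dif_pos (show ξ' < κ ∧ η' < κ from ⟨h3, h4⟩)] at heq
    have h5 := e.injective (en.symm.injective (Subtype.ext heq))
    refine ⟨?_, ?_⟩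
    · exact congrArg Subtype.val (en.injective (congrArg Prod.fst h5))
    · exact congrArg Subtype.val (en.injective (congrArg Prod.snd h5))
  set rp : Ordinal → Ordinal × Ordinal := fun i =>
    if h : ∃ p : Ordinal × Ordinal, (p.1 < κ ∧ p.2 < κ) ∧ q p.1 p.2 = i then h.choose
    else (0, 0) with hrpdef
  have hrplt : ∀ i, (rp i).1 < κ ∧ (rp i).2 < κ := by
    intro i
    by_cases h : ∃ p : Ordinal × Ordinal, (p.1 < κ ∧ p.2 < κ) ∧ q p.1 p.2 = i
    · simp only [hrpdef, dif_pos h]; exact h.choose_spec.1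
    · simp only [hrpdef, dif_neg h]; exact ⟨hκ0, hκ0⟩
  have hrpq : ∀ ξ η, ξ < κ → η < κ → rp (q ξ η) = (ξ, η) := by
    intro ξ η h1 h2
    have hex : ∃ p : Ordinal × Ordinal, (p.1 < κ ∧ p.2 < κ) ∧ q p.1 p.2 = q ξ η :=
      ⟨(ξ, η), ⟨h1, h2⟩, rfl⟩
    simp only [hrpdef, dif_pos hex]
    obtain ⟨⟨ha, hb⟩, hc⟩ := hex.choose_spec
    obtain ⟨hd, he⟩ := hqinj _ _ _ _ ha hb h1 h2 hc
    exact Prod.ext hd he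
  -- the new cofinal sequence
  set B : Ordinal → Ordinal := fun θ =>
    Ordinal.bsup.{0, 0} (θ + 1) (fun i _ => fT (rp i).1 (rp i).2 + 1) + 1 + θ with hBdef
  have hfTlt : ∀ ξ η, ξ < κ → η < κ → fT ξ η < α := by
    intro ξ η h1 h2
    rw [hfT ξ h1]
    exact (hf ξ h1).2.1 η h2
  have hBsuplt : ∀ θ, θ < κ →
      Ordinal.bsup.{0, 0} (θ + 1) (fun i _ => fT (rp i).1 (rp i).2 + 1) < α := by
    intro θ hθ
    refine Ordinal.bsup_lt_ord ?_ ?_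
    · exact Cardinal.lt_ord.1 (by rw [← hκdef]; exact hκlim.succ_lt hθ)
    · intro i _
      rw [Ordinal.add_one_eq_succ]
      exact hα.succ_lt (hfTlt _ _ (hrplt i).1 (hrplt i).2)
  have hadd : ∀ β θ : Ordinal, β < α → θ < κ → β + θ < α := by
    intro β θ hβ hθ
    by_contra hcon
    push_neg at hcon
    have hρ : α - β ≤ θ := Ordinal.sub_le.2 hcon
    have hρ0 : α - β ≠ 0 := by
      intro h0
      exact absurd (Ordinal.sub_eq_zero_iff_le.1 h0) (not_le.2 hβ)
    have hcof : α.cof = (α - β).cof := by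
      conv_lhs => rw [← Ordinal.add_sub_cancel_of_le hβ.le]
      exact Ordinal.cof_add _ hρ0
    have hle : κ ≤ θ :=
      le_trans (le_trans (le_of_eq (by rw [hκdef, hcof])) (Ordinal.ord_cof_le _)) hρ
    exact absurd hθ (not_lt.2 hle)
  have hBlt : ∀ θ, θ < κ → B θ < α := by
    intro θ hθ
    have h1 := hBsuplt θ hθ
    have h2 : Ordinal.bsup.{0, 0} (θ + 1) (fun i _ => fT (rp i).1 (rp i).2 + 1) + 1 < α := by
      rw [Ordinal.add_one_eq_succ]; exact hα.succ_lt h1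
    exact hadd _ _ h2 hθ
  have hBmono : ∀ θ θ' : Ordinal, θ < θ' → B θ < B θ' := by
    intro θ θ' h
    have hsup : Ordinal.bsup.{0, 0} (θ + 1) (fun i _ => fT (rp i).1 (rp i).2 + 1) ≤
        Ordinal.bsup.{0, 0} (θ' + 1) (fun i _ => fT (rp i).1 (rp i).2 + 1) :=
      Ordinal.bsup_le_iff.2 fun i hi =>
        Ordinal.le_bsup _ i (hi.trans_le (by exact add_le_add_left h.le 1))
    calc B θ < Ordinal.bsup.{0, 0} (θ + 1) (fun i _ => fT (rp i).1 (rp i).2 + 1) + 1 + θ' := by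
          rw [hBdef]; exact (add_lt_add_iff_left _).2 h
    _ ≤ B θ' := by
          rw [hBdef]; exact add_le_add_left (add_le_add_left hsup 1) θ'
  have hBge : ∀ ξ η, ξ < κ → η < κ → fT ξ η < B (q ξ η) := by
    intro ξ η h1 h2
    have hle : fT ξ η + 1 ≤
        Ordinal.bsup.{0, 0} (q ξ η + 1) (fun i _ => fT (rp i).1 (rp i).2 + 1) := by
      have h3 := Ordinal.le_bsup (fun i (_ : i < q ξ η + 1) => fT (rp i).1 (rp i).2 + 1)
        (q ξ η) (lt_of_lt_of_le (by rw [Ordinal.add_one_eq_succ]; exact Order.lt_succ _) le_rfl)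
      rwa [hrpq ξ η h1 h2] at h3
    have h4 : fT ξ η < Ordinal.bsup.{0, 0} (q ξ η + 1)
        (fun i _ => fT (rp i).1 (rp i).2 + 1) := by
      refine lt_of_lt_of_le ?_ hle
      rw [Ordinal.add_one_eq_succ]; exact Order.lt_succ _
    exact lt_of_lt_of_le h4 (le_trans (le_self_add (a := _) (b := 1)) le_self_add)
  have hBcof : ∀ β : Ordinal, β < α → ∃ θ : Ordinal, θ < κ ∧ β ≤ B θ := by
    intro β hβ
    obtain ⟨η, hη, hβf⟩ := (hf 0 hκ0).2.2 β hβ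
    refine ⟨q 0 η, hqlt _ _, ?_⟩
    have h5 := hBge 0 η hκ0 hη
    rw [hfT 0 hκ0] at h5
    exact hβf.trans h5.le
  -- selection functions
  set ξof : T → Ordinal := fun x => sInf {ξ | ξ < κ ∧ x ∈ H ξ} with hξofdef
  have hξof : ∀ x ∈ ⋃ ξ ∈ Set.Iio κ, H ξ, ξof x < κ ∧ x ∈ H (ξof x) := by
    intro x hx
    simp only [Set.mem_iUnion, Set.mem_Iio] at hx
    obtain ⟨ξ, hξ, hxξ⟩ := hx
    exact csInf_mem (s := {ξ | ξ < κ ∧ x ∈ H ξ}) ⟨ξ, hξ, hxξ⟩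
  set ηof : T → Ordinal := fun x =>
    if h : ∃ η, η < κ ∧ treeHt hT (πT (ξof x) x) = fT (ξof x) η then h.choose else 0
    with hηofdef
  have hηof : ∀ x ∈ ⋃ ξ ∈ Set.Iio κ, H ξ,
      ηof x < κ ∧ treeHt hT (πT (ξof x) x) = fT (ξof x) (ηof x) := by
    intro x hx
    obtain ⟨hξ, hxξ⟩ := hξof x hx
    have hex : ∃ η, η < κ ∧ treeHt hT (πT (ξof x) x) = fT (ξof x) η := by
      rw [hπT _ hξ, hfT _ hξ]
      exact (hπ _ hξ x hxξ).2
    simp only [hηofdef, dif_pos hex]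
    exact hex.choose_spec
  refine ⟨B, ⟨fun θ θ' h _ => hBmono θ θ' h, hBlt, hBcof⟩,
    fun x => treeRestr hT x (B (q (ξof x) (ηof x))), ?_, ?_⟩
  · -- injectivity
    intro x hx y hy heq
    simp only at heq
    by_contra hne
    obtain ⟨hξx, hxξ⟩ := hξof x hx
    obtain ⟨hηx, hhtx⟩ := hηof x hx
    obtain ⟨hξy, hyξ⟩ := hξof y hy
    obtain ⟨hηy, hhty⟩ := hηof y hy
    have hxα : treeHt hT x = α := hHsub _ hξx hxξ
    have hyα : treeHt hT y = α := hHsub _ hξy hyξ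
    have hBθx : B (q (ξof x) (ηof x)) < α := hBlt _ (hqlt _ _)
    have hBθy : B (q (ξof y) (ηof y)) < α := hBlt _ (hqlt _ _)
    have hhtrx := (treeRestr_spec hT (x := x) (hxα ▸ hBθx)).2
    have hhtry := (treeRestr_spec hT (x := y) (hyα ▸ hBθy)).2
    have hBeq : B (q (ξof x) (ηof x)) = B (q (ξof y) (ηof y)) := by
      rw [← hhtrx, ← hhtry, heq]
    have hθeq : q (ξof x) (ηof x) = q (ξof y) (ηof y) := by
      rcases lt_trichotomy (q (ξof x) (ηof x)) (q (ξof y) (ηof y)) with h | h | h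
      · exact absurd hBeq (ne_of_lt (hBmono _ _ h))
      · exact h
      · exact absurd hBeq.symm (ne_of_lt (hBmono _ _ h))
    obtain ⟨hξeq, hηeq⟩ := hqinj _ _ _ _ hξx hηx hξy hηy hθeq
    have hπxlt : πT (ξof x) x < x := by rw [hπT _ hξx]; exact (hπ _ hξx x hxξ).1
    have hπylt : πT (ξof y) y < y := by rw [hπT _ hξy]; exact (hπ _ hξy y hyξ).1
    have hrx : treeRestr hT x (fT (ξof x) (ηof x)) = πT (ξof x) x :=
      treeRestr_eq hT hπxlt hhtx
    have hry : treeRestr hT y (fT (ξof y) (ηof y)) = πT (ξof y) y :=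
      treeRestr_eq hT hπylt hhty
    have hg : fT (ξof x) (ηof x) < B (q (ξof x) (ηof x)) := hBge _ _ hξx hηx
    have heq' : treeRestr hT x (B (q (ξof x) (ηof x))) =
        treeRestr hT y (B (q (ξof x) (ηof x))) := by
      rw [heq, hθeq]
    have hagree := treeRestr_agree hT hxα hyα hg.le hBθx heq'
    have hfin : πT (ξof x) x = πT (ξof y) y := by
      rw [← hrx, hagree, hξeq, hηeq, hry]
    rw [← hξeq] at hfin hyξ
    rw [hπT _ hξx] at hfin
    exact hne (hπinj _ hξx hxξ hyξ hfin)
  · -- regressive and height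
    intro x hx
    obtain ⟨hξ, hxξ⟩ := hξof x hx
    have hxα : treeHt hT x = α := hHsub _ hξ hxξ
    have hB : B (q (ξof x) (ηof x)) < α := hBlt _ (hqlt _ _)
    obtain ⟨h1, h2⟩ := treeRestr_spec hT (x := x) (hxα ▸ hB)
    exact ⟨h1, q (ξof x) (ηof x), hqlt _ _, h2⟩

/-- A union of `cf α`-many simple subsets of `T_α` is simple; in particular, a countable
union of simple subsets of `T_α` is simple. -/
theorem stmt_10 {T : Type} [PartialOrder T] (hT : IsTreeOrder T) (hHaus : IsHausdorffTree T)
    (α : Ordinal) (hα : Order.IsSuccLimit α)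
    (H : Ordinal → Set T)
    (hHsub : ∀ ξ : Ordinal, ξ < α.cof.ord → H ξ ⊆ treeLevel hT α)
    (hHsimple : ∀ ξ : Ordinal, ξ < α.cof.ord → TreeSimple hT α (H ξ))
    (G : ℕ → Set T)
    (hGsub : ∀ n : ℕ, G n ⊆ treeLevel hT α)
    (hGsimple : ∀ n : ℕ, TreeSimple hT α (G n)) :
    TreeSimple hT α (⋃ ξ ∈ Set.Iio α.cof.ord, H ξ) ∧
      TreeSimple hT α (⋃ n : ℕ, G n) := by
  have hℵ : ℵ₀ ≤ α.cof := Ordinal.aleph0_le_cof.2 hα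
  constructor
  · exact union_simple hT α hα H hHsub hHsimple
  · set H2 : Ordinal → Set T := fun ξ => ⋃ (n : ℕ) (_ : (n : Ordinal) = ξ), G n with hH2
    have hsub2 : ∀ ξ : Ordinal, ξ < α.cof.ord → H2 ξ ⊆ treeLevel hT α := by
      intro ξ _ x hx
      simp only [hH2, Set.mem_iUnion] at hx
      obtain ⟨n, _, hx⟩ := hx
      exact hGsub n hx
    have hsim2 : ∀ ξ : Ordinal, ξ < α.cof.ord → TreeSimple hT α (H2 ξ) := by
      intro ξ _
      by_cases h : ∃ n : ℕ, (n : Ordinal) = ξ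
      · obtain ⟨n, rfl⟩ := h
        have he : H2 ((n : Ordinal)) = G n := by
          ext x
          simp only [hH2, Set.mem_iUnion]
          constructor
          · rintro ⟨m, hm, hx⟩
            have hmn : m = n := Nat.cast_injective hm
            exact hmn ▸ hx
          · intro hx; exact ⟨n, rfl, hx⟩
        rw [he]; exact hGsimple n
      · have he : H2 ξ = ∅ := by
          ext x
          simp only [hH2, Set.mem_iUnion, Set.mem_empty_iff_false, iff_false, not_exists]
          intro n hn _
          exact h ⟨n, hn⟩
        rw [he]
        obtain ⟨f0, hf0, -⟩ := hGsimple 0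
        exact ⟨f0, hf0, id, fun a ha => absurd ha (Set.notMem_empty a),
          fun x hx => absurd hx (Set.notMem_empty x)⟩
    have hun : (⋃ ξ ∈ Set.Iio α.cof.ord, H2 ξ) = ⋃ n : ℕ, G n := by
      ext x
      simp only [Set.mem_iUnion, Set.mem_Iio, hH2]
      constructor
      · rintro ⟨ξ, hξ, n, rfl, hx⟩
        exact ⟨n, hx⟩
      · rintro ⟨n, hx⟩
        refine ⟨(n : Ordinal), ?_, n, rfl, hx⟩
        calc ((n : Ordinal)) < Ordinal.omega0 := Ordinal.nat_lt_omega0 n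
          _ ≤ α.cof.ord := by rw [← Cardinal.ord_aleph0]; exact Cardinal.ord_le_ord.2 hℵ
    rw [← hun]
    exact union_simple hT α hα H2 hsub2 hsim2
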